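/- Let X = {x_1,…,x_n} ⊂ ℝ^d, let S = {s_1,…,s_k} ⊂ ℝ^d be pairwise distinct sites, and let K = (κ_1,…,κ_k) ∈ ℕ^k with κ_1 + … + κ_k = n. Then there exists a k-clustering of X of shape K minimizing ∑_{i=1}^k ∑_{x ∈ C_i} ‖s_i − x‖² among all k-clusterings of X of shape K, and for every such minimizing clustering C = (C_1,…,C_k) there exists γ ∈ ℝ^k such that every x ∈ C_i satisfies (s_j − s_i)^T x ≤ γ_j − γ_i for all j ≠ i (i.e., each cluster C_i is contained in its cell of the (S,γ)-power diagram). -/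

import Mathlib

open scoped RealInnerProductSpace
open Finset


open scoped RealInnerProductSpace
open Finset

namespace BLSA

variable {k : ℕ}

/-- Weight of a path ending at `j` whose earlier vertices, in reverse order, are `l`. -/
def pw (w : Fin k → Fin k → ℝ) : Fin k → List (Fin k) → ℝ
  | _, [] => 0
  | j, a :: t => w a j + pw w a t

lemma pw_append (w : Fin k → Fin k → ℝ) (a : Fin k) (l₁ : List (Fin k)) :
    ∀ (j : Fin k) (l₂ : List (Fin k)),
      pw w j (l₁ ++ a :: l₂) = pw w j (l₁ ++ [a]) + pw w a l₂ := by
  induction l₁ with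
  | nil => intro j l₂; simp [pw]
  | cons b t ih =>
    intro j l₂
    show pw w j (b :: (t ++ a :: l₂)) = pw w j (b :: (t ++ [a])) + pw w a l₂
    simp only [pw]
    rw [ih]
    ring

lemma mem_split_first {α : Type*} {a : α} {l : List α} (h : a ∈ l) :
    ∃ s t, l = s ++ a :: t ∧ a ∉ s := by
  induction l with
  | nil => simp at h
  | cons b l ih =>
    by_cases hab : a = b
    · exact ⟨[], l, by simp [hab], by simp⟩
    · have h' : a ∈ l := by
        rcases List.mem_cons.1 h with h | h
        · exact absurd h hab
        · exact h
      obtain ⟨s, t, rfl, hns⟩ := ih h'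
      exact ⟨b :: s, t, rfl, by simp [hab, hns]⟩

lemma not_nodup_split {α : Type*} {l : List α} (h : ¬ l.Nodup) :
    ∃ (v : α) (l₁ l₂ l₃ : List α), l = l₁ ++ v :: (l₂ ++ v :: l₃) ∧ (v :: l₂).Nodup := by
  induction l with
  | nil => exact absurd List.nodup_nil h
  | cons a l ih =>
    by_cases hnl : l.Nodup
    · have ha : a ∈ l := by
        by_contra hc
        exact h (List.nodup_cons.2 ⟨hc, hnl⟩)
      obtain ⟨s, t, rfl, hns⟩ := mem_split_first ha
      refine ⟨a, [], s, t, by simp, List.nodup_cons.2 ⟨hns, ?_⟩⟩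
      exact (List.sublist_append_left s (a :: t)).nodup hnl
    · obtain ⟨v, l₁, l₂, l₃, rfl, hn⟩ := ih hnl
      exact ⟨v, a :: l₁, l₂, l₃, rfl, hn⟩

lemma pw_le_of_nodup_bound (w : Fin k → Fin k → ℝ)
    (hscyc : ∀ (v : Fin k) (l : List (Fin k)), (v :: l).Nodup → pw w v (l ++ [v]) ≤ 0)
    (γ : Fin k → ℝ) (hγ : ∀ (j : Fin k) (l : List (Fin k)), l.Nodup → pw w j l ≤ γ j)
    (j : Fin k) (l : List (Fin k)) : pw w j l ≤ γ j := by
  have H : ∀ (N : ℕ) (j : Fin k) (l : List (Fin k)), l.length ≤ N → pw w j l ≤ γ j := by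
    intro N
    induction N with
    | zero =>
      intro j l hl
      have : l = [] := List.length_eq_zero_iff.1 (Nat.le_zero.1 hl)
      subst this
      exact hγ j [] List.nodup_nil
    | succ N ih =>
      intro j l hl
      by_cases hnd : l.Nodup
      · exact hγ j l hnd
      · obtain ⟨v, l₁, l₂, l₃, rfl, hn⟩ := not_nodup_split hnd
        have e1 := pw_append w v l₁ j (l₂ ++ v :: l₃)
        have e2 := pw_append w v l₂ v l₃
        have e3 := pw_append w v l₁ j l₃
        have hc := hscyc v l₂ hn
        have hshort : (l₁ ++ v :: l₃).length ≤ N := by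
          simp only [List.length_append, List.length_cons] at hl ⊢
          omega
        have := ih j (l₁ ++ v :: l₃) hshort
        calc pw w j (l₁ ++ v :: (l₂ ++ v :: l₃))
            = pw w j (l₁ ++ [v]) + (pw w v (l₂ ++ [v]) + pw w v l₃) := by rw [e1, e2]
          _ ≤ pw w j (l₁ ++ [v]) + pw w v l₃ := by linarith
          _ = pw w j (l₁ ++ v :: l₃) := by rw [e3]
          _ ≤ γ j := this
  exact H l.length j l le_rfl

lemma le_foldr_max {a b : ℝ} {L : List ℝ} (h : a ∈ L) : a ≤ L.foldr max b := by
  induction L with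
  | nil => simp at h
  | cons c L ih =>
    rcases List.mem_cons.1 h with rfl | h
    · exact le_max_left _ _
    · exact (ih h).trans (le_max_right _ _)

lemma foldr_max_le {b X : ℝ} {L : List ℝ} (hb : b ≤ X) (h : ∀ a ∈ L, a ≤ X) :
    L.foldr max b ≤ X := by
  induction L with
  | nil => simpa
  | cons c L ih => exact max_le (h c (by simp)) (ih fun a ha => h a (by simp [ha]))

def cands (k : ℕ) : List (List (Fin k)) := (List.finRange k).sublists.flatMap List.permutations

lemma mem_cands {l : List (Fin k)} (h : l.Nodup) : l ∈ cands k := by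
  have hsub : l ⊆ List.finRange k := fun a _ => List.mem_finRange a
  obtain ⟨l', hperm, hsl⟩ := List.subperm_of_subset h hsub
  exact List.mem_flatMap.2 ⟨l', List.mem_sublists.2 hsl, List.mem_permutations.2 hperm.symm⟩

lemma exists_potential (w : Fin k → Fin k → ℝ)
    (hscyc : ∀ (v : Fin k) (l : List (Fin k)), (v :: l).Nodup → pw w v (l ++ [v]) ≤ 0) :
    ∃ γ : Fin k → ℝ, ∀ i j, w i j ≤ γ j - γ i := by
  set γ : Fin k → ℝ := fun j => ((cands k).map (pw w j)).foldr max 0 with hγdef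
  have hγ : ∀ (j : Fin k) (l : List (Fin k)), l.Nodup → pw w j l ≤ γ j := fun j l h =>
    le_foldr_max (List.mem_map.2 ⟨l, mem_cands h, rfl⟩)
  have hall := pw_le_of_nodup_bound w hscyc γ hγ
  refine ⟨γ, fun i j => ?_⟩
  have h1 : γ i ≤ γ j - w i j := by
    apply foldr_max_le
    · have h0 := hall j [i]
      simp only [pw] at h0
      linarith
    · intro a ha
      obtain ⟨l, _, rfl⟩ := List.mem_map.1 ha
      have h2 := hall j (i :: l)
      simp only [pw] at h2
      linarith
  linarith

end BLSA

open scoped RealInnerProductSpace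
open Finset

namespace BLSA



lemma pw_eq_sum (w : Fin k → Fin k → ℝ) (dflt : Fin k) :
    ∀ (l : List (Fin k)) (j : Fin k),
      pw w j l = ∑ t ∈ Finset.range l.length, w (l.getD t dflt) ((j :: l).getD t dflt) := by
  intro l
  induction l with
  | nil => intro j; simp [pw]
  | cons a t ih =>
    intro j
    rw [show pw w j (a :: t) = w a j + pw w a t from rfl, ih a]
    rw [List.length_cons, Finset.sum_range_succ']
    simp [List.getD_cons_succ, List.getD_cons_zero]
    ring

lemma cycle_pw_eq (w : Fin k → Fin k → ℝ) (v : Fin k) (l : List (Fin k))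
    (u : Fin (l.length + 1) → Fin k)
    (hu : ∀ t : Fin (l.length + 1), u t = (v :: l).getD t.val v) :
    pw w v (l ++ [v]) = ∑ t : Fin (l.length + 1), w (u (t + 1)) (u t) := by
  rw [pw_eq_sum w v (l ++ [v]) v]
  have hlen : (l ++ [v]).length = l.length + 1 := by simp
  rw [hlen,
    ← Fin.sum_univ_eq_sum_range (fun t => w ((l ++ [v]).getD t v) ((v :: (l ++ [v])).getD t v))
      (l.length + 1)]
  apply Finset.sum_congr rfl
  intro t _
  have ht : t.val < l.length + 1 := t.isLt
  have h2 : (v :: (l ++ [v])).getD t.val v = u t := by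
    rw [hu t, show v :: (l ++ [v]) = (v :: l) ++ [v] from rfl,
      List.getD_append _ _ _ _ (by simpa using ht)]
  have h1 : (l ++ [v]).getD t.val v = u (t + 1) := by
    rw [hu (t + 1)]
    rcases Nat.lt_or_ge t.val l.length with hc | hc
    · have hv : ((t + 1 : Fin (l.length + 1))).val = t.val + 1 := by
        have : (1 : Fin (l.length + 1)).val = 1 % (l.length + 1) := rfl
        rw [Fin.val_add, this]
        have h1l : 1 % (l.length + 1) = 1 := Nat.mod_eq_of_lt (by omega)
        rw [h1l, Nat.mod_eq_of_lt (by omega)]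
      rw [hv, List.getD_append _ _ _ _ hc, List.getD_cons_succ]
    · have hce : t.val = l.length := by omega
      have hv : ((t + 1 : Fin (l.length + 1))).val = 0 := by
        rw [show t = Fin.last l.length from Fin.ext hce, Fin.last_add_one]
        rfl
      rw [hv, List.getD_cons_zero, hce, List.getD_append_right _ _ _ _ (le_refl _)]
      simp
  rw [h1, h2]

end BLSA

open scoped RealInnerProductSpace
open Finset

namespace BLSA

lemma cycle_inner_le {d k n : ℕ} (x : Fin n → EuclideanSpace ℝ (Fin d))
    (s : Fin k → EuclideanSpace ℝ (Fin d)) (c : Fin n → Fin k) (κ : Fin k → ℕ)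
    (hc : ∀ i, (univ.filter fun l => c l = i).card = κ i)
    (hopt : ∀ c' : Fin n → Fin k, (∀ i, (univ.filter fun l => c' l = i).card = κ i) →
        ∑ l, ‖s (c l) - x l‖ ^ 2 ≤ ∑ l, ‖s (c' l) - x l‖ ^ 2)
    (m : ℕ) (u : Fin (m + 1) → Fin k) (hu : Function.Injective u)
    (ℓ : Fin (m + 1) → Fin n) (hℓ : ∀ t, c (ℓ t) = u (t + 1)) :
    ∑ t, ⟪s (u t) - s (u (t + 1)), x (ℓ t)⟫ ≤ 0 := by
  have hinj : Function.Injective ℓ := by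
    intro t t' h
    have h2 : u (t + 1) = u (t' + 1) := by rw [← hℓ t, ← hℓ t', h]
    have := hu h2
    exact add_right_cancel this
  set f : Fin (m + 1) ↪ Fin n := ⟨ℓ, hinj⟩ with hf
  set e : Equiv.Perm (Fin (m + 1)) := (Equiv.addRight (1 : Fin (m + 1))).symm with he
  set σ : Equiv.Perm (Fin n) := e.viaFintypeEmbedding f with hσ
  have key1 : ∀ t, σ (ℓ t) = ℓ (t - 1) := by
    intro t
    have := Equiv.Perm.viaFintypeEmbedding_apply_image e f t
    simpa [hσ, hf, he, Equiv.coe_addRight, sub_eq_add_neg] using this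
  have key2 : ∀ l : Fin n, l ∉ Set.range ℓ → σ l = l := by
    intro l hl
    have : l ∉ Set.range f := by simpa [hf] using hl
    exact Equiv.Perm.viaFintypeEmbedding_apply_notMem_range e f this
  set c' : Fin n → Fin k := fun l => c (σ l) with hc'def
  have hc' : ∀ i, (univ.filter fun l => c' l = i).card = κ i := by
    intro i
    rw [← hc i]
    apply Finset.card_bij' (fun l _ => σ l) (fun l _ => σ.symm l)
    · intro a ha
      simp only [mem_filter, mem_univ, true_and] at ha ⊢
      exact ha
    · intro a ha
      simp only [mem_filter, mem_univ, true_and] at ha ⊢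
      rw [hc'def]; simp [ha]
    · intro a _; simp
    · intro a _; simp
  have hsum := hopt c' hc'
  have hdiff : 0 ≤ ∑ l, (‖s (c' l) - x l‖ ^ 2 - ‖s (c l) - x l‖ ^ 2) := by
    rw [Finset.sum_sub_distrib]
    linarith
  have hzero : ∀ l : Fin n, l ∉ Set.range ℓ →
      ‖s (c' l) - x l‖ ^ 2 - ‖s (c l) - x l‖ ^ 2 = 0 := by
    intro l hl
    rw [hc'def]
    simp [key2 l hl]
  have himage : ∑ l, (‖s (c' l) - x l‖ ^ 2 - ‖s (c l) - x l‖ ^ 2)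
      = ∑ t, (‖s (c' (ℓ t)) - x (ℓ t)‖ ^ 2 - ‖s (c (ℓ t)) - x (ℓ t)‖ ^ 2) := by
    rw [← Finset.sum_image (f := fun l => ‖s (c' l) - x l‖ ^ 2 - ‖s (c l) - x l‖ ^ 2)
      (g := ℓ) (s := univ) (fun t _ t' _ h => hinj h)]
    apply (Finset.sum_subset (Finset.subset_univ _) ?_).symm
    intro l _ hl
    apply hzero
    intro ⟨t, ht⟩
    exact hl (Finset.mem_image.2 ⟨t, Finset.mem_univ t, ht⟩)
  have hterm : ∀ t : Fin (m + 1),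
      ‖s (c' (ℓ t)) - x (ℓ t)‖ ^ 2 - ‖s (c (ℓ t)) - x (ℓ t)‖ ^ 2
        = ‖s (u t)‖ ^ 2 - ‖s (u (t + 1))‖ ^ 2 - 2 * ⟪s (u t) - s (u (t + 1)), x (ℓ t)⟫ := by
    intro t
    have h1 : c' (ℓ t) = u t := by
      rw [hc'def]
      simp only [key1 t, hℓ (t - 1), sub_add_cancel]
    rw [h1, hℓ t, norm_sub_sq_real, norm_sub_sq_real, inner_sub_left]
    ring
  have htel : ∑ t, (‖s (u (t + 1))‖ ^ 2 : ℝ) = ∑ t, (‖s (u t)‖ ^ 2 : ℝ) :=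
    Fintype.sum_equiv (Equiv.addRight (1 : Fin (m + 1)))
      (fun t => ‖s (u (t + 1))‖ ^ 2) (fun t => ‖s (u t)‖ ^ 2) (fun t => rfl)
  have hfin : 0 ≤ ∑ t, (‖s (u t)‖ ^ 2 - ‖s (u (t + 1))‖ ^ 2
      - 2 * ⟪s (u t) - s (u (t + 1)), x (ℓ t)⟫) := by
    rw [← Finset.sum_congr rfl (fun t _ => hterm t), ← himage]
    exact hdiff
  rw [Finset.sum_sub_distrib, Finset.sum_sub_distrib, htel, ← Finset.mul_sum] at hfin
  linarith

end BLSA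

open scoped RealInnerProductSpace
open Finset

namespace BLSA

def sigmaFiber {k : ℕ} (κ : Fin k → ℕ) (i : Fin k) :
    {p : Σ j, Fin (κ j) // p.1 = i} ≃ Fin (κ i) where
  toFun p := Fin.cast (by rw [p.2]) p.1.2
  invFun a := ⟨⟨i, a⟩, rfl⟩
  left_inv := by rintro ⟨⟨j, a⟩, rfl⟩; rfl
  right_inv a := rfl

lemma exists_balanced {k n : ℕ} (κ : Fin k → ℕ) (hκ : ∑ i, κ i = n) :
    ∃ c : Fin n → Fin k, ∀ i, (univ.filter fun l => c l = i).card = κ i := by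
  have hcard : Fintype.card (Σ j, Fin (κ j)) = Fintype.card (Fin n) := by
    simp [Fintype.card_sigma, hκ]
  obtain ⟨e⟩ : Nonempty ((Σ j, Fin (κ j)) ≃ Fin n) := ⟨Fintype.equivOfCardEq hcard⟩
  refine ⟨fun l => (e.symm l).1, fun i => ?_⟩
  rw [← Fintype.card_subtype]
  have e2 : {l : Fin n // (e.symm l).1 = i} ≃ {p : Σ j, Fin (κ j) // p.1 = i} :=
    Equiv.subtypeEquiv e.symm (fun l => Iff.rfl)
  rw [Fintype.card_congr (e2.trans (sigmaFiber κ i)), Fintype.card_fin]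

end BLSA

theorem balanced_least_squares_assignment_exists_and_allows_power_diagram
    (d k n : ℕ) (x : Fin n → EuclideanSpace ℝ (Fin d))
    (s : Fin k → EuclideanSpace ℝ (Fin d)) (hs : Function.Injective s)
    (κ : Fin k → ℕ) (hκ : ∑ i, κ i = n) :
    (∃ c : Fin n → Fin k,
      (∀ i, (univ.filter fun l => c l = i).card = κ i) ∧
      ∀ c' : Fin n → Fin k, (∀ i, (univ.filter fun l => c' l = i).card = κ i) →
        ∑ l, ‖s (c l) - x l‖ ^ 2 ≤ ∑ l, ‖s (c' l) - x l‖ ^ 2) ∧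
    (∀ c : Fin n → Fin k,
      (∀ i, (univ.filter fun l => c l = i).card = κ i) →
      (∀ c' : Fin n → Fin k, (∀ i, (univ.filter fun l => c' l = i).card = κ i) →
        ∑ l, ‖s (c l) - x l‖ ^ 2 ≤ ∑ l, ‖s (c' l) - x l‖ ^ 2) →
      ∃ γ : Fin k → ℝ, ∀ l : Fin n, ∀ j : Fin k, j ≠ c l →
        ⟪s j - s (c l), x l⟫ ≤ γ j - γ (c l)) := by
  classical
  constructor
  · obtain ⟨c₀, hc₀⟩ := BLSA.exists_balanced κ hκ
    have hne : (univ.filter fun c : Fin n → Fin k =>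
        ∀ i, (univ.filter fun l => c l = i).card = κ i).Nonempty :=
      ⟨c₀, mem_filter.2 ⟨mem_univ _, hc₀⟩⟩
    obtain ⟨c, hcmem, hcmin⟩ :=
      Finset.exists_min_image _ (fun c : Fin n → Fin k => ∑ l, ‖s (c l) - x l‖ ^ 2) hne
    rw [mem_filter] at hcmem
    exact ⟨c, hcmem.2, fun c' hc' => hcmin c' (mem_filter.2 ⟨mem_univ _, hc'⟩)⟩
  · intro c hc hopt
    set Cl : Fin k → Finset (Fin n) := fun i => univ.filter fun l => c l = i with hCl
    set M0 : Fin k → Fin k → ℝ := fun i j =>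
      if h : (Cl i).Nonempty then (Cl i).sup' h (fun l => ⟪s j - s i, x l⟫) else 0 with hM0
    set C : ℝ := ∑ i, ∑ j, |M0 i j| with hCdef
    have hC0 : 0 ≤ C :=
      Finset.sum_nonneg fun i _ => Finset.sum_nonneg fun j _ => abs_nonneg _
    have hCb : ∀ i j, M0 i j ≤ C := by
      intro i j
      calc M0 i j ≤ |M0 i j| := le_abs_self _
        _ ≤ ∑ j', |M0 i j'| := Finset.single_le_sum (f := fun j' => |M0 i j'|) (fun _ _ => abs_nonneg _) (mem_univ j)
        _ ≤ C := Finset.single_le_sum (f := fun i' => ∑ j', |M0 i' j'|)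
            (fun i' _ => Finset.sum_nonneg fun _ _ => abs_nonneg _) (mem_univ i)
    set B : ℝ := -(k * C) - 1 with hBdef
    set w : Fin k → Fin k → ℝ := fun i j => if (Cl i).Nonempty then M0 i j else B with hw
    have hwC : ∀ i j, w i j ≤ C := by
      intro i j
      rw [hw]; dsimp only
      split
      · exact hCb i j
      · have hkC : (0:ℝ) ≤ (k:ℝ) * C := mul_nonneg (by positivity) hC0
        rw [hBdef]; linarith
    have hwM : ∀ i j, (Cl i).Nonempty → w i j = M0 i j := by
      intro i j h; rw [hw]; simp [h]
    have hscyc : ∀ (v : Fin k) (l : List (Fin k)), (v :: l).Nodup →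
        BLSA.pw w v (l ++ [v]) ≤ 0 := by
      intro v l hnd
      set u : Fin (l.length + 1) → Fin k := fun t => (v :: l).getD t.val v with hu
      have hueq : ∀ t : Fin (l.length + 1), u t = (v :: l).getD t.val v := fun t => rfl
      rw [BLSA.cycle_pw_eq w v l u hueq]
      have hugets : ∀ t : Fin (l.length + 1),
          u t = (v :: l).get ⟨t.val, by simp; omega⟩ := by
        intro t
        rw [hueq, List.getD_eq_get]
        rfl
      have huinj : Function.Injective u := by
        intro t t' h
        rw [hugets t, hugets t'] at h
        have h2 := (List.nodup_iff_injective_get.1 hnd) h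
        exact Fin.ext (congrArg Fin.val h2)
      by_cases hall : ∀ t, (Cl (u t)).Nonempty
      · have hW : ∀ t : Fin (l.length + 1), ∃ a : Fin n, c a = u (t + 1) ∧
            w (u (t + 1)) (u t) = ⟪s (u t) - s (u (t + 1)), x a⟫ := by
          intro t
          obtain ⟨a, ha, hv⟩ := Finset.exists_mem_eq_sup' (hall (t + 1))
            (fun l' => ⟪s (u t) - s (u (t + 1)), x l'⟫)
          refine ⟨a, ?_, ?_⟩
          · have := ha
            rw [hCl] at this
            simpa using this
          · rw [hwM _ _ (hall (t + 1)), hM0]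
            dsimp only
            rw [dif_pos (hall (t + 1))]
            exact hv
        choose ℓ hℓc hℓv using hW
        rw [Finset.sum_congr rfl (fun t _ => hℓv t)]
        exact BLSA.cycle_inner_le x s c κ hc hopt l.length u huinj ℓ hℓc
      · push_neg at hall
        obtain ⟨t₀, ht₀⟩ := hall
        have hmlek : l.length + 1 ≤ k := by
          have h3 := hnd.length_le_card
          simpa using h3
        have hterm : w (u ((t₀ - 1) + 1)) (u (t₀ - 1)) = B := by
          rw [sub_add_cancel, hw]
          dsimp only
          rw [if_neg (Finset.not_nonempty_iff_eq_empty.2 ht₀)]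
        calc ∑ t, w (u (t + 1)) (u t)
            = w (u ((t₀ - 1) + 1)) (u (t₀ - 1))
              + ∑ t ∈ univ.erase (t₀ - 1), w (u (t + 1)) (u t) :=
              (Finset.add_sum_erase univ _ (mem_univ _)).symm
          _ ≤ B + (univ.erase (t₀ - 1)).card • C := by
              exact add_le_add (le_of_eq hterm)
                (Finset.sum_le_card_nsmul _ _ C (fun t _ => hwC _ _))
          _ ≤ 0 := by
              rw [Finset.card_erase_of_mem (mem_univ _), Finset.card_univ, Fintype.card_fin]
              simp only [nsmul_eq_mul]
              have h1 : ((l.length + 1 - 1 : ℕ) : ℝ) * C ≤ (k : ℝ) * C := by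
                apply mul_le_mul_of_nonneg_right _ hC0
                exact_mod_cast Nat.le_of_lt_succ (by omega)
              rw [hBdef]; linarith
    obtain ⟨γ, hγ⟩ := BLSA.exists_potential w hscyc
    refine ⟨γ, fun l j hj => ?_⟩
    have hmem : l ∈ Cl (c l) := by rw [hCl]; simp
    have hclne : (Cl (c l)).Nonempty := ⟨l, hmem⟩
    have hle : ⟪s j - s (c l), x l⟫ ≤ w (c l) j := by
      rw [hwM _ _ hclne, hM0]
      dsimp only
      rw [dif_pos hclne]
      exact Finset.le_sup' (fun l' => ⟪s j - s (c l), x l'⟫) hmem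
    exact hle.trans (hγ (c l) j)
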